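/- Let V be a 3-dimensional real inner product space, A : V → V self-adjoint and trace-free, and ω ∈ V with ‖ω‖² = 2. Write w = ⟨Aω,ω⟩ and q = ‖Aω^⊥‖² (the squared norm of the component of Aω orthogonal to ω). Then for every real number s: 8(‖A‖²_{HS} - q/2) - s·w ≥ 3w² - s·w + 4q. -/

import Mathlib

open RealInnerProductSpace

lemma trace_ortho {V : Type*} [NormedAddCommGroup V] [InnerProductSpace ℝ V]
    [FiniteDimensional ℝ V] {ι : Type*} [Fintype ι] [DecidableEq ι]
    (b : OrthonormalBasis ι ℝ V) (A : V →ₗ[ℝ] V) :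
    LinearMap.trace ℝ V A = ∑ i, ⟪A (b i), b i⟫ := by
  rw [LinearMap.trace_eq_matrix_trace ℝ b.toBasis A, Matrix.trace]
  congr 1; ext i
  rw [Matrix.diag_apply, LinearMap.toMatrix_apply, b.coe_toBasis, b.coe_toBasis_repr_apply,
    b.repr_apply_apply, real_inner_comm]

/-- Let `A` be self-adjoint and trace-free on a 3-dimensional real inner product
space and `ω` with `‖ω‖² = 2`. Write `w = ⟪Aω,ω⟫` and `q = ‖Aω^⊥‖²` where
`Aω^⊥ = Aω - (w/2)ω`. Then for every real `s`:
`8(‖A‖²_HS - q/2) - s·w ≥ 3w² - s·w + 4q`,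
with `‖A‖²_HS = trace(A∘A)` the Hilbert–Schmidt norm squared. -/
theorem stmt_10 {V : Type*} [NormedAddCommGroup V] [InnerProductSpace ℝ V]
    [FiniteDimensional ℝ V] (h3 : Module.finrank ℝ V = 3)
    (A : V →ₗ[ℝ] V) (hA : LinearMap.IsSymmetric A)
    (htr : LinearMap.trace ℝ V A = 0) (ω : V) (hω : ⟪ω, ω⟫ = 2)
    (w q : ℝ) (hw : w = ⟪A ω, ω⟫) (hq : q = ‖A ω - (w / 2) • ω‖ ^ 2) :
    ∀ s : ℝ, 8 * (LinearMap.trace ℝ V (A ∘ₗ A) - q / 2) - s * w ≥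
      3 * w ^ 2 - s * w + 4 * q := by
  intro s
  -- the unit vector e
  set e : V := (Real.sqrt 2)⁻¹ • ω with he
  have h2 : (0:ℝ) < Real.sqrt 2 := by positivity
  have hee : ⟪e, e⟫ = 1 := by
    rw [he, real_inner_smul_left, real_inner_smul_right, hω]
    rw [← mul_assoc, ← mul_inv, Real.mul_self_sqrt (by norm_num), inv_mul_cancel₀ (by norm_num)]
  have hωe : ω = Real.sqrt 2 • e := by
    rw [he, smul_smul, mul_inv_cancel₀ h2.ne', one_smul]
  -- extend to orthonormal basis
  have hv : Orthonormal ℝ (Set.restrict {(0 : Fin 3)} (fun _ => e)) := by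
    rw [orthonormal_iff_ite]
    rintro ⟨i, hi⟩ ⟨j, hj⟩
    simp only [Set.mem_singleton_iff] at hi hj
    subst hi; subst hj
    rw [if_pos rfl]; exact hee
  obtain ⟨b, hb⟩ := hv.exists_orthonormalBasis_extension_of_card_eq
    (by simpa using h3) (v := fun _ => e)
  have hb0 : b 0 = e := hb 0 rfl
  -- matrix entries
  set a : Fin 3 → Fin 3 → ℝ := fun i j => ⟪A (b i), b j⟫ with ha
  have hsym : ∀ i j, a i j = a j i := fun i j => by
    rw [ha]; simp only; rw [real_inner_comm, hA]
  have hnorm : ∀ x : V, ⟪x, x⟫ = ∑ j, ⟪x, b j⟫ * ⟪x, b j⟫ := fun x => by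
    rw [← b.sum_inner_mul_inner x x]
    congr 1; ext j; rw [real_inner_comm x (b j)]
  -- trace identities
  have htrA : a 0 0 + a 1 1 + a 2 2 = 0 := by
    have := trace_ortho b A
    rw [htr] at this
    rw [Fin.sum_univ_three] at this
    linarith [this.symm]
  have htrAA : LinearMap.trace ℝ V (A ∘ₗ A) =
      ∑ i, ∑ j, a i j * a i j := by
    rw [trace_ortho b (A ∘ₗ A)]
    congr 1; ext i
    rw [LinearMap.comp_apply, hA (A (b i)) (b i), hnorm (A (b i))]
  -- w in terms of a
  have hwa : w = 2 * a 0 0 := by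
    rw [hw, hωe, map_smul, real_inner_smul_left, real_inner_smul_right, hb0.symm, ha]
    have : Real.sqrt 2 * (Real.sqrt 2 * ⟪A (b 0), b 0⟫) = 2 * ⟪A (b 0), b 0⟫ := by
      rw [← mul_assoc, Real.mul_self_sqrt (by norm_num)]
    simpa using this
  -- q in terms of a
  have hAω : ⟪A ω, A ω⟫ = 2 * (a 0 0 ^ 2 + a 0 1 ^ 2 + a 0 2 ^ 2) := by
    rw [hωe, ← hb0, map_smul, real_inner_smul_left, real_inner_smul_right, ← mul_assoc,
      Real.mul_self_sqrt (by norm_num), hnorm (A (b 0)), Fin.sum_univ_three]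
    simp only [ha]; ring
  have hqa : q = 2 * (a 0 1 ^ 2 + a 0 2 ^ 2) := by
    rw [hq, ← real_inner_self_eq_norm_sq]
    simp only [inner_sub_left, inner_sub_right, real_inner_smul_left, real_inner_smul_right]
    have hcomm : ⟪ω, A ω⟫ = w := by rw [real_inner_comm]; exact hw.symm
    rw [hω, hAω, hcomm, ← hw, hwa]
    ring
  rw [htrAA, Fin.sum_univ_three, Fin.sum_univ_three, Fin.sum_univ_three, Fin.sum_univ_three,
    hwa, hqa, hsym 1 0, hsym 2 0, hsym 2 1]
  have h00 : a 0 0 ^ 2 = (a 1 1 + a 2 2) ^ 2 := by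
    rw [show a 0 0 = -(a 1 1 + a 2 2) by linarith]; ring
  nlinarith [h00, sq_nonneg (a 1 1 - a 2 2), sq_nonneg (a 1 2)]
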